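/- arXiv:1304.0832 — 3 statements merged into one kernel-verified Lean document; each statement's English description precedes it below -/
import Mathlib

section
/- Let μ : ℝ → ℝ with μ(0) < 0, λ ↦ λ² − μ(λ) strictly convex and continuous on [0,∞), and (λ² − μ(λ))/λ → +∞ as λ → +∞. Then the equation λ² − μ(λ) − c*λ = 0, where c* = inf_{λ>0} (λ² − μ(λ))/λ, admits a unique positive solution λ*. -/
open Real Filter Set Topology

theorem stmt2 (μ : ℝ → ℝ) (hμ0 : μ 0 < 0)
    (hconv : StrictConvexOn ℝ (Set.Ici 0) (fun l => l^2 - μ l))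
    (hcont : ContinuousOn (fun l => l^2 - μ l) (Set.Ici 0))
    (htend : Tendsto (fun l => (l^2 - μ l) / l) atTop atTop) :
    ∃! lstar : ℝ, 0 < lstar ∧
      lstar^2 - μ lstar - sInf ((fun l => (l^2 - μ l) / l) '' Set.Ioi 0) * lstar = 0 := by
  set g : ℝ → ℝ := fun l => l^2 - μ l with hgdef
  set h : ℝ → ℝ := fun l => (l^2 - μ l) / l with hhdef
  set c : ℝ := sInf (h '' Set.Ioi 0) with hcdef
  have hg0 : 0 < g 0 := by simp only [hgdef]; nlinarith
  have hgcont0 : Tendsto g (𝓝[>] (0:ℝ)) (𝓝 (g 0)) :=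
    (hcont 0 Set.self_mem_Ici).mono_left (nhdsWithin_mono _ Set.Ioi_subset_Ici_self)
  have hinv : Tendsto (fun l : ℝ => l⁻¹) (𝓝[>] (0:ℝ)) atTop := tendsto_inv_nhdsGT_zero
  have h0 : Tendsto h (𝓝[>] (0:ℝ)) atTop := by
    have := hgcont0.pos_mul_atTop hg0 hinv
    simpa [hhdef, div_eq_mul_inv] using this
  set M : ℝ := h 1 with hMdef
  have h0ev : ∀ᶠ l in 𝓝[>] (0:ℝ), M < h l := h0.eventually_gt_atTop M
  rw [eventually_iff, mem_nhdsGT_iff_exists_Ioc_subset] at h0ev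
  obtain ⟨ε, hε0, hεsub⟩ := h0ev
  obtain ⟨B, hB⟩ := eventually_atTop.mp (htend.eventually_gt_atTop M)
  set a : ℝ := min ε 1 with hadef
  set b : ℝ := max B 1 with hbdef
  have ha0 : 0 < a := lt_min hε0 one_pos
  have hab1 : (1:ℝ) ∈ Set.Icc a b := ⟨min_le_right _ _, le_max_right _ _⟩
  have hsub : Set.Icc a b ⊆ Set.Ici (0:ℝ) := fun x hx => le_trans ha0.le hx.1
  have hKcont : ContinuousOn h (Set.Icc a b) := by
    apply ContinuousOn.div (hcont.mono hsub) continuousOn_id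
    intro x hx
    exact ne_of_gt (lt_of_lt_of_le ha0 hx.1)
  obtain ⟨x, hxK, hxmin⟩ := isCompact_Icc.exists_isMinOn ⟨1, hab1⟩ hKcont
  have hx0 : 0 < x := lt_of_lt_of_le ha0 hxK.1
  have hxM : h x ≤ M := hxmin hab1
  have hmin : ∀ l ∈ Set.Ioi (0:ℝ), h x ≤ h l := by
    intro l hl
    by_cases hK : l ∈ Set.Icc a b
    · exact hxmin hK
    · rw [Set.mem_Icc, not_and_or] at hK
      rcases hK with hK | hK
      · push_neg at hK
        have hlε : l ∈ Set.Ioc (0:ℝ) ε := ⟨hl, le_of_lt (lt_of_lt_of_le hK (min_le_left _ _))⟩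
        exact le_trans hxM (le_of_lt (hεsub hlε))
      · push_neg at hK
        have : B ≤ l := le_trans (le_max_left _ _) hK.le
        exact le_trans hxM (le_of_lt (hB l this))
  have hleast : IsLeast (h '' Set.Ioi 0) (h x) :=
    ⟨⟨x, hx0, rfl⟩, by rintro _ ⟨l, hl, rfl⟩; exact hmin l hl⟩
  have hcx : c = h x := hleast.csInf_eq
  have hnonneg : ∀ l ∈ Set.Ioi (0:ℝ), c * l ≤ g l := by
    intro l hl
    have h1 : c ≤ h l := hcx ▸ hmin l hl
    have h2 : c * l ≤ h l * l := mul_le_mul_of_nonneg_right h1 (le_of_lt hl)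
    have h3 : h l * l = g l := div_mul_cancel₀ _ (ne_of_gt hl)
    linarith
  have hxeq : x^2 - μ x - c * x = 0 := by
    have : c * x = g x := by
      rw [hcx]; exact div_mul_cancel₀ _ (ne_of_gt hx0)
    simp only [hgdef] at this
    linarith
  refine ⟨x, ⟨hx0, hxeq⟩, ?_⟩
  rintro y ⟨hy0, hyeq⟩
  by_contra hne
  have hgy : g y = c * y := by simp only [hgdef]; linarith
  have hgx : g x = c * x := by simp only [hgdef]; linarith
  have hmid := hconv.2 (le_of_lt hy0) (le_of_lt hx0) hne
    (by norm_num : (0:ℝ) < 1/2) (by norm_num : (0:ℝ) < 1/2) (by norm_num)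
  rw [smul_eq_mul, smul_eq_mul, smul_eq_mul, smul_eq_mul] at hmid
  have hm0 : (0:ℝ) < 1/2 * y + 1/2 * x := by linarith
  have := hnonneg _ hm0
  simp only [hgdef] at this hmid
  nlinarith [hmid, this]
end

section
/- Let a : ℝ → ℝ be bounded with ‖a‖_∞ ≤ M, λ* > 0, c' > 0 with λ*² − c'λ* = −M and M ≥ λ*². Let C, R, y, K₀ > 0 with K₀ = max{C, 2M}. Then w̄₁(t,x) := K₀·min{1, e^{−λ*x}}·t·e^{λ*(R − y + c't)} satisfies, for all t > 0 and x ≠ 0: ∂_t w̄₁ − ∂_{xx} w̄₁ − a(x)·w̄₁ ≥ min{2M, C e^{−2λ*x}}·e^{λ*(x + R − y + c't)}. -/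
open Real Filter Set Topology

theorem stmt16 (a : ℝ → ℝ) (M lstar c' C R y : ℝ)
    (hM : ∀ x, |a x| ≤ M) (hls : 0 < lstar) (hMl : lstar^2 ≤ M)
    (hc' : lstar^2 - c' * lstar = -M) (hC : 0 < C) (hR : 0 < R) :
    ∀ t : ℝ, 0 < t → ∀ x : ℝ, x ≠ 0 →
      min (2 * M) (C * Real.exp (-2 * lstar * x)) * Real.exp (lstar * (x + R - y + c' * t))
        ≤ deriv (fun s => max C (2 * M) * min 1 (Real.exp (-lstar * x)) * s
              * Real.exp (lstar * (R - y + c' * s))) t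
          - deriv (deriv (fun z => max C (2 * M) * min 1 (Real.exp (-lstar * z)) * t
              * Real.exp (lstar * (R - y + c' * t)))) x
          - a x * (max C (2 * M) * min 1 (Real.exp (-lstar * x)) * t
              * Real.exp (lstar * (R - y + c' * t))) := by
  intro t ht x hx
  set K := max C (2*M) with hKdef
  set E := Real.exp (lstar*(R-y+c'*t)) with hEdef
  have hEpos : (0:ℝ) < E := Real.exp_pos _
  -- time derivative
  have htderiv : deriv (fun s => K * min 1 (Real.exp (-lstar*x)) * s
      * Real.exp (lstar * (R - y + c' * s))) t
      = K * min 1 (Real.exp (-lstar*x)) * E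
        + K * min 1 (Real.exp (-lstar*x)) * t * (E * (lstar * c')) := by
    set m := min 1 (Real.exp (-lstar*x)) with hmdef
    have h1 : HasDerivAt (fun s : ℝ => K * m * s) (K*m) t := by
      simpa using (hasDerivAt_id t).const_mul (K*m)
    have harg : HasDerivAt (fun s : ℝ => lstar * (R - y + c' * s)) (lstar * c') t := by
      have h := (((hasDerivAt_id t).const_mul c').const_add (R - y)).const_mul lstar
      simpa using h
    have h2 : HasDerivAt (fun s : ℝ => Real.exp (lstar * (R - y + c' * s)))
        (E * (lstar * c')) t := by
      simpa [hEdef] using harg.exp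
    have := (h1.mul h2).deriv
    rw [← this]; rfl
  rcases hx.lt_or_gt with hxneg | hxpos
  · -- x < 0
    have hxderiv : deriv (deriv (fun z => K * min 1 (Real.exp (-lstar*z)) * t * E)) x = 0 := by
      have h0 : ∀ z < (0:ℝ), deriv (fun z => K * min 1 (Real.exp (-lstar*z)) * t * E) z = 0 := by
        intro z hz
        have heq : (fun z => K * min 1 (Real.exp (-lstar*z)) * t * E)
            =ᶠ[nhds z] (fun _ => K * 1 * t * E) := by
          filter_upwards [Iio_mem_nhds hz] with w hw
          have : (1:ℝ) ≤ Real.exp (-lstar*w) := by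
            apply Real.one_le_exp
            nlinarith [Set.mem_Iio.mp hw]
          rw [min_eq_left this]
        rw [heq.deriv_eq, deriv_const]
      have heq2 : deriv (fun z => K * min 1 (Real.exp (-lstar*z)) * t * E)
          =ᶠ[nhds x] (fun _ => (0:ℝ)) := by
        filter_upwards [Iio_mem_nhds hxneg] with z hz
        exact h0 z hz
      rw [heq2.deriv_eq, deriv_const]
    have hmin : min 1 (Real.exp (-lstar*x)) = 1 := by
      apply min_eq_left
      apply Real.one_le_exp
      nlinarith
    rw [htderiv, hxderiv, hmin]
    have hexp : Real.exp (lstar * (x + R - y + c' * t)) = Real.exp (lstar*x) * E := by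
      rw [hEdef, ← Real.exp_add]; ring_nf
    rw [hexp]
    have h2M : 2*M ≤ K := le_max_right _ _
    have hmin2 : min (2*M) (C * Real.exp (-2*lstar*x)) ≤ 2*M := min_le_left _ _
    have hex1 : Real.exp (lstar*x) ≤ 1 := by
      apply Real.exp_le_one_iff.mpr; nlinarith
    have hexpos : (0:ℝ) < Real.exp (lstar*x) := Real.exp_pos _
    have ha : a x ≤ M := (abs_le.mp (hM x)).2
    have hlc : lstar * c' = lstar^2 + M := by linear_combination -hc'
    have hMnn : (0:ℝ) ≤ 2*M := by nlinarith [sq_nonneg lstar]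
    have hKnn : (0:ℝ) ≤ K := le_trans hC.le (le_max_left _ _)
    have key1 : min (2*M) (C * Real.exp (-2*lstar*x)) * (Real.exp (lstar*x) * E)
        ≤ K * 1 * E := by
      calc min (2*M) (C * Real.exp (-2*lstar*x)) * (Real.exp (lstar*x) * E)
          ≤ 2*M * (Real.exp (lstar*x) * E) :=
            mul_le_mul_of_nonneg_right hmin2 (by positivity)
        _ ≤ 2*M * (1 * E) := by
            apply mul_le_mul_of_nonneg_left _ hMnn
            exact mul_le_mul_of_nonneg_right hex1 hEpos.le
        _ ≤ K * 1 * E := by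
            rw [one_mul]
            exact mul_le_mul_of_nonneg_right (by rw [mul_one]; exact h2M) hEpos.le
    have key2 : (0:ℝ) ≤ K * 1 * t * (E * (lstar * c')) - a x * (K * 1 * t * E) := by
      have heq : K * 1 * t * (E * (lstar * c')) - a x * (K * 1 * t * E)
          = K * t * E * (lstar * c' - a x) := by ring
      rw [heq]
      apply mul_nonneg (by positivity)
      nlinarith [sq_nonneg lstar]
    linarith
  · -- x > 0
    have hxderiv : deriv (deriv (fun z => K * min 1 (Real.exp (-lstar*z)) * t * E)) x
        = K * t * E * (lstar^2 * Real.exp (-lstar*x)) := by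
      have h0 : ∀ z > (0:ℝ), deriv (fun z => K * min 1 (Real.exp (-lstar*z)) * t * E) z
          = K * t * E * (Real.exp (-lstar*z) * (-lstar)) := by
        intro z hz
        have heq : (fun z => K * min 1 (Real.exp (-lstar*z)) * t * E)
            =ᶠ[nhds z] (fun w => K * t * E * Real.exp (-lstar*w)) := by
          filter_upwards [Ioi_mem_nhds hz] with w hw
          have : Real.exp (-lstar*w) ≤ 1 := by
            apply Real.exp_le_one_iff.mpr
            nlinarith [Set.mem_Ioi.mp hw]
          rw [min_eq_right this]; ring
        rw [heq.deriv_eq]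
        have h1 : HasDerivAt (fun w : ℝ => Real.exp (-lstar*w))
            (Real.exp (-lstar*z) * (-lstar)) z := by
          simpa using ((hasDerivAt_id z).const_mul (-lstar)).exp
        have := (h1.const_mul (K*t*E)).deriv
        simpa using this
      have heq2 : deriv (fun z => K * min 1 (Real.exp (-lstar*z)) * t * E)
          =ᶠ[nhds x] (fun w => K * t * E * (Real.exp (-lstar*w) * (-lstar))) := by
        filter_upwards [Ioi_mem_nhds hxpos] with z hz
        exact h0 z hz
      rw [heq2.deriv_eq]
      have h1 : HasDerivAt (fun w : ℝ => Real.exp (-lstar*w))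
          (Real.exp (-lstar*x) * (-lstar)) x := by
        simpa using ((hasDerivAt_id x).const_mul (-lstar)).exp
      have h2 := h1.const_mul (K*t*E*(-lstar))
      have hfeq : (fun w : ℝ => K*t*E*(-lstar) * Real.exp (-lstar*w))
          = (fun w : ℝ => K * t * E * (Real.exp (-lstar*w) * (-lstar))) := by
        funext w; ring
      rw [hfeq] at h2
      rw [h2.deriv]; ring
    have hmin : min 1 (Real.exp (-lstar*x)) = Real.exp (-lstar*x) := by
      apply min_eq_right
      apply Real.exp_le_one_iff.mpr
      nlinarith
    rw [htderiv, hxderiv, hmin]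
    have hexp : Real.exp (lstar * (x + R - y + c' * t)) = Real.exp (lstar*x) * E := by
      rw [hEdef, ← Real.exp_add]; ring_nf
    rw [hexp]
    have hCK : C ≤ K := le_max_left _ _
    have hmin2 : min (2*M) (C * Real.exp (-2*lstar*x)) ≤ C * Real.exp (-2*lstar*x) :=
      min_le_right _ _
    have hex2 : Real.exp (-2*lstar*x) = Real.exp (-lstar*x) * Real.exp (-lstar*x) := by
      rw [← Real.exp_add]; ring_nf
    have hex3 : Real.exp (lstar*x) * Real.exp (-lstar*x) = 1 := by
      rw [← Real.exp_add]; simp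
    have hexpos : (0:ℝ) < Real.exp (lstar*x) := Real.exp_pos _
    have huPos : (0:ℝ) < Real.exp (-lstar*x) := Real.exp_pos _
    have ha : a x ≤ M := (abs_le.mp (hM x)).2
    have hlc : lstar * c' = lstar^2 + M := by linear_combination -hc'
    set u := Real.exp (-lstar*x)
    set v := Real.exp (lstar*x)
    have key1 : min (2*M) (C * Real.exp (-2*lstar*x)) * (v * E) ≤ C * u * E := by
      calc min (2*M) (C * Real.exp (-2*lstar*x)) * (v * E)
          ≤ C * Real.exp (-2*lstar*x) * (v * E) :=
            mul_le_mul_of_nonneg_right hmin2 (by positivity)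
        _ = C * u * E * (v * u) := by rw [hex2]; ring
        _ = C * u * E := by rw [mul_comm v u] at hex3 ⊢; rw [hex3, mul_one]
    have key2 : C * u * E ≤ K * u * E + K * u * t * (E * (lstar*c'))
        - K * t * E * (lstar^2 * u) - a x * (K * u * t * E) := by
      have hterm : K * u * t * (E * (lstar*c')) - K * t * E * (lstar^2 * u)
          - a x * (K * u * t * E) = K * u * t * E * (M - a x) := by
        rw [hlc]; ring
      nlinarith [mul_le_mul_of_nonneg_right hCK (mul_nonneg huPos.le hEpos.le),
        mul_nonneg (mul_nonneg (mul_nonneg (le_trans hC.le hCK) huPos.le) ht.le)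
          (mul_nonneg hEpos.le (by linarith : (0:ℝ) ≤ M - a x))]
    linarith
end

section
/- Let c' > 0, λ* > 0, and for each k let s_k > 0 be the smallest solution of s·exp(λ*(−y_k + c'·s)) = A, where A > 0 is a fixed constant and y_k → +∞. Then c'·s_k ∼ y_k as k → +∞, i.e. c'·s_k/y_k → 1. -/
open Real Filter Set Topology

theorem stmt17 (c' lstar A : ℝ) (hc : 0 < c') (hls : 0 < lstar) (hA : 0 < A)
    (y s : ℕ → ℝ) (hy : Tendsto y atTop atTop)
    (hs : ∀ k, 0 < s k ∧ s k * Real.exp (lstar * (-(y k) + c' * s k)) = A ∧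
      ∀ s' : ℝ, 0 < s' → s' * Real.exp (lstar * (-(y k) + c' * s')) = A → s k ≤ s') :
    Tendsto (fun k => c' * s k / y k) atTop (nhds 1) := by
  have hev : ∀ᶠ k in atTop, max (c' * A) 1 < y k := hy.eventually_gt_atTop _
  have key : ∀ᶠ k in atTop,
      A ≤ s k ∧ s k ≤ y k / c' ∧ 0 < y k ∧
      c' * s k / y k = 1 + (Real.log A - Real.log (s k)) / (lstar * y k) := by
    filter_upwards [hev] with k hk
    obtain ⟨hsk, heq, -⟩ := hs k
    have hy0 : (0 : ℝ) < y k := lt_of_le_of_lt (by positivity) ((le_max_right _ _).trans_lt hk)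
    have hcA : c' * A < y k := (le_max_left _ _).trans_lt hk
    -- c' * s k < y k
    have hlt : c' * s k < y k := by
      by_contra h
      push_neg at h
      have hexp : (1 : ℝ) ≤ Real.exp (lstar * (-(y k) + c' * s k)) :=
        Real.one_le_exp (by nlinarith)
      nlinarith [hsk]
    have hsA : A ≤ s k := by
      have hexp : Real.exp (lstar * (-(y k) + c' * s k)) ≤ 1 := by
        have : lstar * (-(y k) + c' * s k) ≤ 0 := by nlinarith
        simpa using Real.exp_le_exp.2 this
      nlinarith [hsk]
    refine ⟨hsA, ?_, hy0, ?_⟩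
    · rw [le_div_iff₀ hc]; nlinarith
    · -- take logs of the equation
      have hlog : Real.log (s k) + lstar * (-(y k) + c' * s k) = Real.log A := by
        rw [← heq, Real.log_mul (ne_of_gt hsk) (Real.exp_ne_zero _), Real.log_exp]
      have hls' : lstar ≠ 0 := ne_of_gt hls
      have hy' : y k ≠ 0 := ne_of_gt hy0
      field_simp
      nlinarith [hlog, mul_pos hls hy0]
  -- the error term tends to 0
  have hlog_div : Tendsto (fun k => Real.log (y k) / y k) atTop (nhds 0) :=
    (Real.isLittleO_log_id_atTop.tendsto_div_nhds_zero).comp hy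
  have hinv : Tendsto (fun k => (y k)⁻¹) atTop (nhds 0) := hy.inv_tendsto_atTop
  have hlow : Tendsto (fun k => (Real.log A + Real.log c' - Real.log (y k)) / (lstar * y k))
      atTop (nhds 0) := by
    have : Tendsto (fun k => ((Real.log A + Real.log c') / lstar) * (y k)⁻¹
        - lstar⁻¹ * (Real.log (y k) / y k)) atTop (nhds 0) := by
      have := (hinv.const_mul ((Real.log A + Real.log c') / lstar)).sub
        (hlog_div.const_mul lstar⁻¹)
      simpa using this
    refine this.congr' ?_
    filter_upwards [hy.eventually_gt_atTop 0] with k hk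
    have : y k ≠ 0 := ne_of_gt hk
    field_simp
  have herr : Tendsto (fun k => (Real.log A - Real.log (s k)) / (lstar * y k)) atTop (nhds 0) := by
    refine tendsto_of_tendsto_of_tendsto_of_le_of_le' hlow tendsto_const_nhds ?_ ?_
    · filter_upwards [key] with k ⟨h1, h2, h3, _⟩
      have hs0 : 0 < s k := lt_of_lt_of_le hA h1
      have hls2 : Real.log (s k) ≤ Real.log (y k) - Real.log c' := by
        have := Real.log_le_log hs0 h2
        rwa [Real.log_div (ne_of_gt h3) (ne_of_gt hc)] at this
      exact (div_le_div_iff_of_pos_right (mul_pos hls h3)).2 (by linarith)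
    · filter_upwards [key] with k ⟨h1, h2, h3, _⟩
      have hs0 : 0 < s k := lt_of_lt_of_le hA h1
      have : Real.log A ≤ Real.log (s k) := Real.log_le_log hA h1
      apply div_nonpos_of_nonpos_of_nonneg (by linarith) (le_of_lt (mul_pos hls h3))
  have : Tendsto (fun k => 1 + (Real.log A - Real.log (s k)) / (lstar * y k)) atTop (nhds 1) := by
    simpa using tendsto_const_nhds.add herr
  exact Tendsto.congr' (key.mono fun k hk => hk.2.2.2.symm) this
end
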